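/- arXiv:2210.15841 — 4 statements merged into one kernel-verified Lean document; each statement's English description precedes it below -/
import Mathlib

section
/- For fixed Δ > 0, the function γ ↦ α(γ,Δ) := (1 − e^{−Δγ})/(e^{Δγ} − e^{−Δγ}) is convex on (0, ∞). -/
open Real

private lemma congr_convexOn {s : Set ℝ} {f g : ℝ → ℝ} (hg : ConvexOn ℝ s g)
    (h : Set.EqOn f g s) : ConvexOn ℝ s f := by
  refine ⟨hg.1, fun x hx y hy a b ha hb hab => ?_⟩
  rw [h hx, h hy, h (hg.1 hx hy ha hb hab)]
  exact hg.2 hx hy ha hb hab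

private lemma aux_convex (Δ : ℝ) (hΔ : 0 < Δ) :
    ConvexOn ℝ (Set.Ioi (0 : ℝ)) (fun γ : ℝ => (Real.exp (Δ * γ) + 1)⁻¹) := by
  have hne : ∀ γ : ℝ, Real.exp (Δ * γ) + 1 ≠ 0 := fun γ => by positivity
  have hd1 : ∀ γ : ℝ, HasDerivAt (fun γ : ℝ => (Real.exp (Δ * γ) + 1)⁻¹)
      (-(Real.exp (Δ * γ) * Δ) / (Real.exp (Δ * γ) + 1) ^ 2) γ := by
    intro γ
    have h0 : HasDerivAt (fun γ : ℝ => Δ * γ) Δ γ := by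
      simpa using (hasDerivAt_id γ).const_mul Δ
    exact (((h0.exp).add_const 1).inv (hne γ))
  have hderiv : deriv (fun γ : ℝ => (Real.exp (Δ * γ) + 1)⁻¹)
      = fun γ : ℝ => -(Real.exp (Δ * γ) * Δ) / (Real.exp (Δ * γ) + 1) ^ 2 :=
    funext fun γ => (hd1 γ).deriv
  have hd2 : ∀ γ : ℝ,
      HasDerivAt (fun γ : ℝ => -(Real.exp (Δ * γ) * Δ) / (Real.exp (Δ * γ) + 1) ^ 2)
      ((-(Real.exp (Δ * γ) * Δ * Δ) * (Real.exp (Δ * γ) + 1) ^ 2 -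
        -(Real.exp (Δ * γ) * Δ) * (2 * (Real.exp (Δ * γ) + 1) ^ 1 * (Real.exp (Δ * γ) * Δ)))
        / ((Real.exp (Δ * γ) + 1) ^ 2) ^ 2) γ := by
    intro γ
    have h0 : HasDerivAt (fun γ : ℝ => Δ * γ) Δ γ := by
      simpa using (hasDerivAt_id γ).const_mul Δ
    have hu : HasDerivAt (fun γ : ℝ => -(Real.exp (Δ * γ) * Δ))
        (-(Real.exp (Δ * γ) * Δ * Δ)) γ := by
      have h1 := ((h0.exp).const_mul Δ).neg
      have h2 : (-fun y : ℝ => Δ * Real.exp (Δ * y)) = fun γ : ℝ => -(Real.exp (Δ * γ) * Δ) := by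
        funext y; simp only [Pi.neg_apply]; ring
      rw [h2] at h1
      exact h1.congr_deriv (by ring)
    have hv : HasDerivAt (fun γ : ℝ => (Real.exp (Δ * γ) + 1) ^ 2)
        (2 * (Real.exp (Δ * γ) + 1) ^ 1 * (Real.exp (Δ * γ) * Δ)) γ :=
      ((h0.exp).add_const 1).pow 2
    exact hu.div hv (pow_ne_zero 2 (hne γ))
  apply convexOn_of_deriv2_nonneg (convex_Ioi 0)
  · exact Continuous.continuousOn
      (((Real.continuous_exp.comp (continuous_const.mul continuous_id)).add
        continuous_const).inv₀ hne)
  · intro γ _; exact (hd1 γ).differentiableAt.differentiableWithinAt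
  · intro γ _
    rw [hderiv]
    exact (hd2 γ).differentiableAt.differentiableWithinAt
  · intro γ hγ
    rw [interior_Ioi] at hγ
    have hγ' : (0:ℝ) < Δ * γ := mul_pos hΔ hγ
    have he1 : (1:ℝ) ≤ Real.exp (Δ * γ) := (Real.one_le_exp_iff).2 hγ'.le
    have : deriv^[2] (fun γ : ℝ => (Real.exp (Δ * γ) + 1)⁻¹) γ
        = deriv (deriv (fun γ : ℝ => (Real.exp (Δ * γ) + 1)⁻¹)) γ := by
      simp [Function.iterate_succ, Function.comp]
    rw [this, hderiv, (hd2 γ).deriv]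
    have hnum : 0 ≤ -(Real.exp (Δ * γ) * Δ * Δ) * (Real.exp (Δ * γ) + 1) ^ 2 -
        -(Real.exp (Δ * γ) * Δ) * (2 * (Real.exp (Δ * γ) + 1) ^ 1 * (Real.exp (Δ * γ) * Δ)) := by
      have hpos := Real.exp_pos (Δ * γ)
      have heq : -(Real.exp (Δ * γ) * Δ * Δ) * (Real.exp (Δ * γ) + 1) ^ 2 -
          -(Real.exp (Δ * γ) * Δ) * (2 * (Real.exp (Δ * γ) + 1) ^ 1 * (Real.exp (Δ * γ) * Δ))
          = Δ ^ 2 * Real.exp (Δ * γ) * (Real.exp (Δ * γ) + 1) * (Real.exp (Δ * γ) - 1) := by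
        ring
      rw [heq]
      have : 0 ≤ Real.exp (Δ * γ) - 1 := by linarith
      positivity
    positivity

/-- For fixed `Δ > 0`, the map
`γ ↦ α(γ,Δ) = (1 - e^{-Δγ})/(e^{Δγ} - e^{-Δγ})` is convex on `(0, ∞)`. -/
theorem alpha_convex_in_gamma (Δ : ℝ) (hΔ : 0 < Δ) :
    ConvexOn ℝ (Set.Ioi (0 : ℝ))
      (fun γ : ℝ =>
        (1 - Real.exp (-(Δ * γ))) / (Real.exp (Δ * γ) - Real.exp (-(Δ * γ)))) := by
  apply congr_convexOn (aux_convex Δ hΔ)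
  intro γ hγ
  have hγ' : (0:ℝ) < Δ * γ := mul_pos hΔ hγ
  have ht : (1:ℝ) < Real.exp (Δ * γ) := by
    rw [← Real.exp_zero]; exact Real.exp_lt_exp.mpr hγ'
  have ht0 : (0:ℝ) < Real.exp (Δ * γ) := Real.exp_pos _
  have hinv : Real.exp (-(Δ * γ)) = (Real.exp (Δ * γ))⁻¹ := Real.exp_neg _
  set t := Real.exp (Δ * γ) with hts
  have hden : t - t⁻¹ ≠ 0 := by
    have : t⁻¹ < t := lt_trans (inv_lt_one_of_one_lt₀ ht) ht
    linarith
  have ht1 : t + 1 ≠ 0 := by positivity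
  show (1 - Real.exp (-(Δ * γ))) / (Real.exp (Δ * γ) - Real.exp (-(Δ * γ)))
      = (Real.exp (Δ * γ) + 1)⁻¹
  rw [hinv]
  rw [← hts]
  field_simp
  have ht2 : t * t - 1 ≠ 0 := by nlinarith
  rw [div_eq_one_iff_eq (by rw [sq]; exact ht2)]
  ring
end

section
/- The function α ↦ (1 − 2α)/ln((1−α)/α) is concave on (0, 1/2). -/
open Real Set

private lemma hasDerivAt_L (x : ℝ) (hx0 : 0 < x) (hx1 : x < 1) :
    HasDerivAt (fun z : ℝ => Real.log ((1 - z) / z)) (-(1 / (x * (1 - x)))) x := by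
  have hxne : x ≠ 0 := hx0.ne'
  have h1x : (0:ℝ) < 1 - x := by linarith
  have h1 : HasDerivAt (fun z : ℝ => (1 - z) / z) ((-1 * x - (1 - x) * 1) / x ^ 2) x :=
    ((hasDerivAt_id x).const_sub 1).div (hasDerivAt_id x) hxne
  have hne : (1 - x) / x ≠ 0 := by positivity
  have h2 := h1.log hne
  convert h2 using 1
  field_simp
  ring

private lemma key_log (x : ℝ) (hx0 : 0 < x) (hx1 : x < 1/2) :
    2 * (1 - 2 * x) ≤ Real.log ((1 - x) / x) := by
  have hanti : AntitoneOn (fun z : ℝ => Real.log ((1 - z) / z) + 4 * z)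
      (Set.Icc x (1/2)) := by
    apply antitoneOn_of_hasDerivWithinAt_nonpos (f' := fun z => -(1 / (z * (1 - z))) + 4)
      (convex_Icc _ _)
    · apply ContinuousOn.add
      · apply ContinuousOn.log
        · apply ContinuousOn.div (by fun_prop) (by fun_prop)
          intro z hz
          exact (lt_of_lt_of_le hx0 hz.1).ne'
        · intro z hz
          have hz0 : 0 < z := lt_of_lt_of_le hx0 hz.1
          have hz1 : z < 1 := by have := hz.2; linarith
          have : (0:ℝ) < (1 - z) / z := div_pos (by linarith) hz0
          exact this.ne'
      · fun_prop
    · intro z hz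
      rw [interior_Icc] at hz
      have hz0 : 0 < z := lt_trans hx0 hz.1
      have hz1 : z < 1 := by have := hz.2; linarith
      have h : HasDerivAt (fun z : ℝ => Real.log ((1 - z) / z) + 4 * z)
          (-(1 / (z * (1 - z))) + 4) z := by
        have h := (hasDerivAt_L z hz0 hz1).fun_add ((hasDerivAt_id z).const_mul 4)
        exact h.congr_deriv (by simp)
      exact h.hasDerivWithinAt
    · intro z hz
      rw [interior_Icc] at hz
      have hz0 : 0 < z := lt_trans hx0 hz.1
      have hz1 : z < 1/2 := hz.2
      have hq : 0 < z * (1 - z) := by nlinarith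
      have : 1 / (z * (1 - z)) ≥ 4 := by
        rw [ge_iff_le, le_div_iff₀ hq]
        nlinarith
      linarith
  have h1 := hanti (Set.left_mem_Icc.mpr hx1.le) (Set.right_mem_Icc.mpr hx1.le) hx1.le
  norm_num at h1
  linarith

/-- The function `α ↦ (1 - 2α)/ln((1-α)/α)` is concave on `(0, 1/2)`. -/
theorem h_concave :
    ConcaveOn ℝ (Set.Ioo (0 : ℝ) (1 / 2))
      (fun α : ℝ => (1 - 2 * α) / Real.log ((1 - α) / α)) := by
  have hint : interior (Set.Ioo (0:ℝ) (1/2)) = Set.Ioo (0:ℝ) (1/2) := isOpen_Ioo.interior_eq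
  set L : ℝ → ℝ := fun z => Real.log ((1 - z) / z) with hLdef
  set f1 : ℝ → ℝ := fun z => (-2 * L z + (1 - 2*z) / (z * (1 - z))) / (L z)^2 with hf1def
  set f2 : ℝ → ℝ := fun z => (2*(1 - 2*z) - L z) / ((z*(1-z))^2 * (L z)^3) with hf2def
  -- basic facts
  have basic : ∀ x ∈ Set.Ioo (0:ℝ) (1/2), 0 < x ∧ x < 1/2 ∧ 0 < 1 - x ∧ 0 < x*(1-x) ∧ 0 < L x := by
    intro x hx
    obtain ⟨hx0, hx1⟩ := hx
    have h1x : (0:ℝ) < 1 - x := by linarith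
    refine ⟨hx0, hx1, h1x, by positivity, ?_⟩
    apply Real.log_pos
    rw [lt_div_iff₀ hx0]
    linarith
  apply concaveOn_of_hasDerivWithinAt2_nonpos (f' := f1) (f'' := f2) (convex_Ioo _ _)
  · -- continuity
    apply ContinuousOn.div
    · fun_prop
    · apply ContinuousOn.log
      · apply ContinuousOn.div (by fun_prop) (by fun_prop)
        intro z hz; exact hz.1.ne'
      · intro z hz
        obtain ⟨hz0,_,h1z,_,_⟩ := basic z hz
        have : (0:ℝ) < (1 - z) / z := div_pos h1z hz0
        exact this.ne'
    · intro z hz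
      obtain ⟨_,_,_,_,hL⟩ := basic z hz
      exact hL.ne'
  · intro x hx
    rw [hint] at hx
    obtain ⟨hx0, hx1, h1x, hq, hL⟩ := basic x hx
    have hder : HasDerivAt (fun z : ℝ => (1 - 2*z) / L z) (f1 x) x := by
      have hLd := hasDerivAt_L x hx0 (by linarith)
      have hN : HasDerivAt (fun z : ℝ => 1 - 2*z) (-2) x := by
        simpa using ((hasDerivAt_id x).const_mul 2).const_sub 1
      have h := hN.fun_div hLd hL.ne'
      refine h.congr_deriv ?_
      rw [hf1def]
      simp only [hLdef] at hL ⊢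
      field_simp
      ring
    exact (hder.congr_deriv rfl).hasDerivWithinAt
  · intro x hx
    rw [hint] at hx
    obtain ⟨hx0, hx1, h1x, hq, hL⟩ := basic x hx
    have hLd := hasDerivAt_L x hx0 (by linarith)
    have hN : HasDerivAt (fun z : ℝ => 1 - 2*z) (-2) x := by
      simpa using ((hasDerivAt_id x).const_mul 2).const_sub 1
    have hqd : HasDerivAt (fun z : ℝ => z * (1 - z)) (1 - 2*x) x := by
      have := (hasDerivAt_id x).fun_mul ((hasDerivAt_id x).const_sub 1)
      refine this.congr_deriv ?_
      simp only [id_eq]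
      ring
    have hu : HasDerivAt (fun z : ℝ => -2 * L z + (1 - 2*z) / (z * (1 - z)))
        (-2 * (-(1 / (x * (1 - x)))) + ((-2) * (x*(1-x)) - (1 - 2*x) * (1 - 2*x)) / (x*(1-x))^2)
        x := (hLd.const_mul (-2)).add (hN.div hqd hq.ne')
    have hden : HasDerivAt (fun z : ℝ => (L z)^2) (2 * (L x) * (-(1 / (x * (1 - x))))) x := by
      have := hLd.fun_pow 2
      refine this.congr_deriv ?_; ring
    have hLsq : (L x)^2 ≠ 0 := by positivity
    have h := hu.fun_div hden hLsq
    have hder : HasDerivAt f1 (f2 x) x := by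
      refine h.congr_deriv ?_
      rw [hf2def]
      field_simp
      ring
    exact hder.hasDerivWithinAt
  · intro x hx
    rw [hint] at hx
    obtain ⟨hx0, hx1, h1x, hq, hL⟩ := basic x hx
    rw [hf2def]
    apply div_nonpos_of_nonpos_of_nonneg
    · have := key_log x hx0 hx1
      simp only [hLdef]
      linarith
    · positivity
end

section
/- Define R(γ, Δ) = Δ·(1 − e^{−Δγ})/(e^{Δγ} − e^{−Δγ}) + (2γ/Δ)·(e^{Δγ} + e^{−Δγ} − 2)/(e^{Δγ} − e^{−Δγ}) for γ, Δ > 0. For every fixed γ ≥ 0 (with R(0, Δ) := Δ/2), the map Δ ↦ R(γ, Δ) is quasi-concave on (0, ∞), i.e., for every ν ∈ ℝ the superlevel set {Δ > 0 : R(γ, Δ) ≥ ν} is convex. -/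
open Real

/-- The regret function `R(γ,Δ)` (with cost parameter `η = 1`), extended to `γ = 0`
by its limit `R(0, Δ) = Δ/2`. -/
noncomputable def regretR (γ Δ : ℝ) : ℝ :=
  if γ = 0 then Δ / 2
  else
    Δ * (1 - Real.exp (-(Δ * γ))) / (Real.exp (Δ * γ) - Real.exp (-(Δ * γ))) +
      2 * γ / Δ * ((Real.exp (Δ * γ) + Real.exp (-(Δ * γ)) - 2) /
        (Real.exp (Δ * γ) - Real.exp (-(Δ * γ))))

/-! ### Auxiliary lemmas -/

lemma exp_half_bounds {x : ℝ} (hx0 : 0 ≤ x) (hx : x ≤ 1) :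
    1 - x + x^2/2 - x^3/6 + x^4/24 - x^5/100 ≤ exp (-x) ∧
      exp (-x) ≤ 1 - x + x^2/2 - x^3/6 + x^4/24 + x^5/100 := by
  have h := Real.exp_bound (x := -x) (by rwa [abs_neg, abs_of_nonneg hx0]) (n := 5) (by norm_num)
  have hs : ∑ i ∈ Finset.range 5, (-x)^i / (Nat.factorial i : ℝ)
      = 1 - x + x^2/2 - x^3/6 + x^4/24 := by
    simp [Finset.sum_range_succ, Nat.factorial]
    ring
  rw [hs, abs_neg, abs_of_nonneg hx0] at h
  rw [abs_le] at h
  norm_num [Nat.factorial] at h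
  constructor <;> nlinarith [h.1, h.2]

lemma exp_neg_two_lb {x : ℝ} (h0 : 0 ≤ x) (h1 : x ≤ 1) :
    1 - 2*x + (2*x)^2/2 - (2*x)^3/6 ≤ exp (-(2*x)) := by
  obtain ⟨hl, _⟩ := exp_half_bounds h0 h1
  have hsq : exp (-(2*x)) = exp (-x) * exp (-x) := by
    rw [← Real.exp_add]; ring_nf
  have hpos : (0:ℝ) ≤ 1 - x + x^2/2 - x^3/6 + x^4/24 - x^5/100 := by
    nlinarith [sq_nonneg (x - 3/2), pow_nonneg h0 4,
      pow_le_pow_of_le_one h0 h1 (show 2 ≤ 3 by norm_num),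
      pow_le_pow_of_le_one h0 h1 (show 2 ≤ 5 by norm_num)]
  have hmul := mul_self_le_mul_self hpos hl
  rw [hsq]
  have hpoly : 1 - 2*x + (2*x)^2/2 - (2*x)^3/6 ≤
      (1 - x + x^2/2 - x^3/6 + x^4/24 - x^5/100) * (1 - x + x^2/2 - x^3/6 + x^4/24 - x^5/100) := by
    nlinarith [pow_nonneg h0 4, pow_nonneg h0 6, pow_nonneg h0 8, pow_nonneg h0 10,
      pow_le_pow_of_le_one h0 h1 (show 4 ≤ 5 by norm_num),
      pow_le_pow_of_le_one h0 h1 (show 4 ≤ 7 by norm_num),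
      pow_le_pow_of_le_one h0 h1 (show 4 ≤ 9 by norm_num)]
  linarith

lemma exp_neg_two_ub {x : ℝ} (h0 : 0 ≤ x) (h1 : x ≤ 1) :
    exp (-(2*x)) ≤ 1 - 2*x + (2*x)^2/2 - (2*x)^3/6 + (2*x)^4/24 := by
  obtain ⟨_, hu⟩ := exp_half_bounds h0 h1
  have hsq : exp (-(2*x)) = exp (-x) * exp (-x) := by
    rw [← Real.exp_add]; ring_nf
  have hepos : 0 ≤ exp (-x) := (Real.exp_pos _).le
  have hmul := mul_self_le_mul_self hepos hu
  rw [hsq]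
  have hpoly : (1 - x + x^2/2 - x^3/6 + x^4/24 + x^5/100) * (1 - x + x^2/2 - x^3/6 + x^4/24 + x^5/100)
      ≤ 1 - 2*x + (2*x)^2/2 - (2*x)^3/6 + (2*x)^4/24 := by
    nlinarith [pow_nonneg h0 5, pow_nonneg h0 7, pow_nonneg h0 8, pow_nonneg h0 10,
      pow_le_pow_of_le_one h0 h1 (show 5 ≤ 6 by norm_num),
      pow_le_pow_of_le_one h0 h1 (show 5 ≤ 9 by norm_num),
      pow_le_pow_of_le_one h0 h1 (show 5 ≤ 10 by norm_num)]
  linarith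

lemma T_pos {t : ℝ} (ht0 : 0 < t) (ht : t ≤ 13/10) :
    0 ≤ (2/3)*t^3 - t^4 + (5/6)*t^5 - (5/18)*t^6 + (1/12)*t^7 - (1/108)*t^9
      - 5*(t^4/24) - 2*(t^4/24)^2 := by
  nlinarith [mul_pos ht0 ht0, sq_nonneg (t - 1/2), sq_nonneg (t - 1), sq_nonneg (t - 13/10),
    mul_nonneg (mul_nonneg ht0.le ht0.le) ht0.le, sq_nonneg (t^2 - 1),
    mul_nonneg (sub_nonneg.2 ht) ht0.le, mul_nonneg (mul_nonneg (sub_nonneg.2 ht) ht0.le) ht0.le,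
    mul_nonneg (mul_nonneg (sub_nonneg.2 ht) (sub_nonneg.2 ht)) ht0.le,
    pow_pos ht0 3, pow_pos ht0 4, pow_pos ht0 5]

set_option maxHeartbeats 1000000 in
lemma G_nonneg {t : ℝ} (ht0 : 0 < t) (ht : t ≤ 13/10) :
    0 ≤ 2*(exp (-t))^3 + (2-3*t^2)*(exp (-t))^2 + (4*t-4*t^2-2)*(exp (-t)) + (4*t-2-t^2) := by
  have h2t : -(2*(t/2)) = -t := by ring
  have hx0 : 0 ≤ t/2 := by linarith
  have hx1 : t/2 ≤ 1 := by linarith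
  have hl := exp_neg_two_lb hx0 hx1
  have hu := exp_neg_two_ub hx0 hx1
  rw [h2t] at hl hu
  set b := exp (-t) with hb
  set l : ℝ := 1 - t + t^2/2 - t^3/6 with hldef
  have hl' : l ≤ b := by rw [hldef]; convert hl using 1; ring
  have hu' : b ≤ l + t^4/24 := by rw [hldef]; convert hu using 1; ring
  set s := b - l with hs
  have hs0 : 0 ≤ s := by simp only [hs]; linarith
  have hs1 : s ≤ t^4/24 := by simp only [hs]; linarith
  have hexp : 2*b^3 + (2-3*t^2)*b^2 + (4*t-4*t^2-2)*b + (4*t-2-t^2)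
      = ((2/3)*t^3 - t^4 + (5/6)*t^5 - (5/18)*t^6 + (1/12)*t^7 - (1/108)*t^9)
        + (8 - 12*t + 4*t^2 - (8/3)*t^3 + (1/2)*t^4 + (1/6)*t^6)*s
        + (8 - 6*t - t^3)*s^2 + 2*s^3 := by
    have hbls : b = l + s := by rw [hs]; ring
    rw [hbls, hldef]; ring
  have hA : (-5:ℝ) ≤ 8 - 12*t + 4*t^2 - (8/3)*t^3 + (1/2)*t^4 + (1/6)*t^6 := by
    nlinarith [sq_nonneg (t-1), pow_pos ht0 3, pow_pos ht0 4, pow_pos ht0 6,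
      mul_nonneg (sub_nonneg.2 ht) ht0.le]
  have hB : (-2:ℝ) ≤ 8 - 6*t - t^3 := by nlinarith [pow_pos ht0 2]
  have hAs := mul_le_mul_of_nonneg_right hA hs0
  have hBs := mul_le_mul_of_nonneg_right hB (sq_nonneg s)
  have hsq : s^2 ≤ (t^4/24)^2 := by
    have h := mul_self_le_mul_self hs0 hs1
    calc s^2 = s*s := sq s
    _ ≤ (t^4/24)*(t^4/24) := h
    _ = (t^4/24)^2 := (sq _).symm
  have hs3 : 0 ≤ 2*s^3 := by positivity
  have hT := T_pos ht0 ht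
  rw [hexp]
  nlinarith [hAs, hBs, hsq, hs1, hs0, hT, hs3]

lemma key_ineq {t : ℝ} (ht0 : 0 < t) (ht : t ≤ 13/10) :
    (2*t + 2*t*exp (-t) - t^2*exp (-t) - 3*t^2) * ((exp t - exp (-t))/2 - t)
      ≤ (t^2*(1 + exp (-t) - t)) * ((exp t + exp (-t))/2 - 1) := by
  have hab : exp t * exp (-t) = 1 := by rw [← Real.exp_add]; simp
  have hbpos : 0 < exp (-t) := Real.exp_pos _
  have hG := G_nonneg ht0 ht
  have hid : 2*exp (-t)*((t^2*(1 + exp (-t) - t)) * ((exp t + exp (-t))/2 - 1)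
        - (2*t + 2*t*exp (-t) - t^2*exp (-t) - 3*t^2) * ((exp t - exp (-t))/2 - t))
      = t*(2*(exp (-t))^3 + (2-3*t^2)*(exp (-t))^2 + (4*t-4*t^2-2)*(exp (-t)) + (4*t-2-t^2)) := by
    linear_combination (-2*t + 4*t^2 - t^3 - 2*exp (-t)*t + 2*exp (-t)*t^2) * hab
  nlinarith [mul_nonneg ht0.le hG, hbpos]

noncomputable def Afun (t : ℝ) : ℝ := t^2*(1 + exp (-t) - t)
noncomputable def Bfun (t : ℝ) : ℝ := (exp t - exp (-t))/2 - t
noncomputable def phiF (c u : ℝ) : ℝ := Afun u - 4*c*(Bfun u)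

lemma Bfun_pos {t : ℝ} (ht : 0 < t) : 0 < Bfun t := by
  have h := Real.self_lt_sinh_iff.2 ht
  rw [Real.sinh_eq] at h
  simp only [Bfun]
  linarith

lemma hasDerivAt_exp_neg (t : ℝ) : HasDerivAt (fun x : ℝ => exp (-x)) (-exp (-t)) t := by
  have h := ((hasDerivAt_id t).neg).exp
  simpa using h

lemma hasDerivAt_Afun (t : ℝ) :
    HasDerivAt Afun (2*t + 2*t*exp (-t) - t^2*exp (-t) - 3*t^2) t := by
  have hin : HasDerivAt (fun x : ℝ => 1 + exp (-x) - x) (-exp (-t) - 1) t :=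
    ((hasDerivAt_exp_neg t).const_add 1).sub (hasDerivAt_id t)
  have hsq : HasDerivAt (fun x : ℝ => x^2) (2*t) t := by
    simpa using hasDerivAt_pow 2 t
  have h := hsq.mul hin
  exact h.congr_deriv (by ring)

lemma hasDerivAt_Bfun (t : ℝ) :
    HasDerivAt Bfun ((exp t + exp (-t))/2 - 1) t := by
  have h := (((Real.hasDerivAt_exp t).sub (hasDerivAt_exp_neg t)).div_const 2).sub (hasDerivAt_id t)
  exact h.congr_deriv (by ring)

lemma phi_prop {c u v : ℝ} (hc : 0 ≤ c) (hu : 0 < u) (huv : u ≤ v)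
    (hv : 0 ≤ phiF c v) : 0 ≤ phiF c u := by
  have hv0 : 0 < v := lt_of_lt_of_le hu huv
  have hBv := Bfun_pos hv0
  have hBu := Bfun_pos hu
  have hAv : 4*c*(Bfun v) ≤ Afun v := by simpa [phiF, sub_nonneg] using hv
  have hAv0 : 0 ≤ Afun v := le_trans (by positivity) hAv
  have hpv : 0 ≤ 1 + exp (-v) - v := by
    by_contra h
    push_neg at h
    have hneg : Afun v < 0 := by
      simp only [Afun]
      have hv2 : (0:ℝ) < v^2 := by positivity
      nlinarith
    linarith
  have hv13 : v ≤ 13/10 := by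
    by_contra h
    push_neg at h
    have h1 : exp (-v) < exp (-(13/10)) := Real.exp_lt_exp.2 (by linarith)
    have h2 : exp (-(13/10) : ℝ) < 3/10 := by
      rw [Real.exp_neg]
      rw [inv_lt_comm₀ (Real.exp_pos _) (by norm_num)]
      have hs := Real.sum_le_exp_of_nonneg (show (0:ℝ) ≤ 13/10 by norm_num) 4
      have heq : ∑ i ∈ Finset.range 4, ((13:ℝ)/10) ^ i / (Nat.factorial i : ℝ)
          = 1 + 13/10 + (13/10)^2/2 + (13/10)^3/6 := by
        norm_num [Finset.sum_range_succ, Nat.factorial]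
      rw [heq] at hs
      nlinarith
    linarith
  have hanti : AntitoneOn (fun t => Afun t / Bfun t) (Set.Icc u v) := by
    apply antitoneOn_of_deriv_nonpos (convex_Icc u v)
    · apply ContinuousOn.div
      · exact fun t ht => ((hasDerivAt_Afun t).continuousAt).continuousWithinAt
      · exact fun t ht => ((hasDerivAt_Bfun t).continuousAt).continuousWithinAt
      · intro t ht
        exact (Bfun_pos (lt_of_lt_of_le hu ht.1)).ne'
    · intro t ht
      rw [interior_Icc] at ht
      have ht0 : 0 < t := lt_trans hu ht.1
      exact (((hasDerivAt_Afun t).div (hasDerivAt_Bfun t) (Bfun_pos ht0).ne')).differentiableAt.differentiableWithinAt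
    · intro t ht
      rw [interior_Icc] at ht
      have ht0 : 0 < t := lt_trans hu ht.1
      have hd := ((hasDerivAt_Afun t).div (hasDerivAt_Bfun t) (Bfun_pos ht0).ne')
      rw [show (fun t => Afun t / Bfun t) = Afun / Bfun from rfl, hd.deriv]
      apply div_nonpos_of_nonpos_of_nonneg
      · have hk := key_ineq ht0 (le_trans (le_of_lt ht.2) hv13)
        simp only [Afun, Bfun]
        nlinarith [hk]
      · positivity
  have hHuv : Afun v / Bfun v ≤ Afun u / Bfun u :=
    hanti (Set.left_mem_Icc.2 huv) (Set.right_mem_Icc.2 huv) huv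
  have h4c : 4*c ≤ Afun v / Bfun v := (le_div_iff₀ hBv).2 hAv
  have h4u : 4*c ≤ Afun u / Bfun u := le_trans h4c hHuv
  have hfin := (le_div_iff₀ hBu).1 h4u
  simp only [phiF, sub_nonneg]
  linarith

noncomputable def gfun (γ Δ : ℝ) : ℝ :=
  Δ/(exp (Δ*γ)+1) + 2*γ*((exp (Δ*γ)-1)/(Δ*(exp (Δ*γ)+1)))

lemma regretR_eq {γ Δ : ℝ} (hγ : 0 < γ) (hΔ : 0 < Δ) : regretR γ Δ = gfun γ Δ := by
  rw [regretR, if_neg hγ.ne', gfun]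
  have hE1 : 1 < exp (Δ*γ) := Real.one_lt_exp_iff.2 (by positivity)
  rw [Real.exp_neg]
  set E := exp (Δ*γ) with hE
  have hE0 : 0 < E := by linarith
  have hne : E - E⁻¹ ≠ 0 := by
    have hinv : E⁻¹ < 1 := by rw [inv_lt_one_iff₀]; right; exact hE1
    intro h; nlinarith [hinv]
  have hne2 : E + 1 ≠ 0 := by positivity
  have hE2 : (0:ℝ) < E^2 - 1 := by nlinarith
  have hd : E - E⁻¹ = (E^2-1)/E := by field_simp
  rw [hd]
  field_simp
  ring

lemma hasDerivAt_gfun {γ Δ : ℝ} (hγ : 0 < γ) (hΔ : 0 < Δ) :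
    HasDerivAt (gfun γ)
      (exp (Δ*γ) * phiF (γ^3) (Δ*γ) / ((Δ*γ)^2 * (exp (Δ*γ)+1)^2)) Δ := by
  have hE : HasDerivAt (fun x : ℝ => exp (x*γ)) (exp (Δ*γ)*γ) Δ := by
    simpa using ((hasDerivAt_id Δ).mul_const γ).exp
  have hE0 : 0 < exp (Δ*γ) := Real.exp_pos _
  have hne1 : exp (Δ*γ) + 1 ≠ 0 := by positivity
  have hne2 : Δ*(exp (Δ*γ) + 1) ≠ 0 := by positivity
  have h1 := (hasDerivAt_id Δ).div (hE.add_const 1) hne1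
  have h2a := hE.sub_const 1
  have h2b := (hasDerivAt_id Δ).mul (hE.add_const 1)
  have h2 := (h2a.div h2b hne2).const_mul (2*γ)
  have htot := h1.add h2
  refine htot.congr_deriv ?_
  simp only [phiF, Afun, Bfun, Real.exp_neg, id, Pi.mul_apply]
  field_simp
  ring

/-- for every fixed `γ ≥ 0`, the map `Δ ↦ R(γ, Δ)` is quasi-concave on
`(0, ∞)`: every superlevel set `{Δ > 0 : R(γ, Δ) ≥ ν}` is convex. -/
theorem regretR_quasiconcave_in_Delta (γ : ℝ) (hγ : 0 ≤ γ) (ν : ℝ) :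
    Convex ℝ {Δ : ℝ | Δ ∈ Set.Ioi (0 : ℝ) ∧ ν ≤ regretR γ Δ} := by
  rcases eq_or_lt_of_le hγ with h0 | hγpos
  · -- γ = 0 : R(0,Δ) = Δ/2
    have hset : {Δ : ℝ | Δ ∈ Set.Ioi (0:ℝ) ∧ ν ≤ regretR γ Δ}
        = Set.Ioi (0:ℝ) ∩ Set.Ici (2*ν) := by
      ext Δ
      simp only [Set.mem_setOf_eq, Set.mem_inter_iff, Set.mem_Ioi, Set.mem_Ici,
        regretR, ← h0, if_pos rfl, if_true]
      constructor
      · rintro ⟨h1, h2⟩; exact ⟨h1, by linarith⟩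
      · rintro ⟨h1, h2⟩; exact ⟨h1, by linarith⟩
    rw [hset]
    exact (convex_Ioi 0).inter (convex_Ici _)
  · apply Set.OrdConnected.convex
    rw [Set.ordConnected_iff]
    rintro x ⟨hx0, hxν⟩ y ⟨hy0, hyν⟩ hxy z hz
    obtain ⟨hxz, hzy⟩ := hz
    simp only [Set.mem_Ioi] at hx0 hy0
    have hz0 : (0:ℝ) < z := lt_of_lt_of_le hx0 hxz
    refine ⟨Set.mem_Ioi.2 hz0, ?_⟩
    rw [regretR_eq hγpos hz0]
    rw [regretR_eq hγpos hx0] at hxν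
    rw [regretR_eq hγpos hy0] at hyν
    by_cases hsign : 0 ≤ phiF (γ^3) (z*γ)
    · have hmono : MonotoneOn (gfun γ) (Set.Icc x z) := by
        apply monotoneOn_of_deriv_nonneg (convex_Icc x z)
        · exact fun t ht =>
            ((hasDerivAt_gfun hγpos (lt_of_lt_of_le hx0 ht.1)).differentiableAt).continuousAt.continuousWithinAt
        · intro t ht
          rw [interior_Icc] at ht
          exact ((hasDerivAt_gfun hγpos (lt_trans hx0 ht.1)).differentiableAt).differentiableWithinAt
        · intro t ht
          rw [interior_Icc] at ht
          have ht0 : 0 < t := lt_trans hx0 ht.1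
          rw [(hasDerivAt_gfun hγpos ht0).deriv]
          apply div_nonneg
          · apply mul_nonneg (Real.exp_pos _).le
            exact phi_prop (by positivity) (by positivity)
              (mul_le_mul_of_nonneg_right ht.2.le hγpos.le) hsign
          · positivity
      have hle := hmono (Set.mem_Icc.2 ⟨le_refl x, hxz⟩) (Set.mem_Icc.2 ⟨hxz, le_refl z⟩) hxz
      linarith
    · push_neg at hsign
      have hanti : AntitoneOn (gfun γ) (Set.Icc z y) := by
        apply antitoneOn_of_deriv_nonpos (convex_Icc z y)
        · exact fun t ht =>
            ((hasDerivAt_gfun hγpos (lt_of_lt_of_le hz0 ht.1)).differentiableAt).continuousAt.continuousWithinAt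
        · intro t ht
          rw [interior_Icc] at ht
          exact ((hasDerivAt_gfun hγpos (lt_trans hz0 ht.1)).differentiableAt).differentiableWithinAt
        · intro t ht
          rw [interior_Icc] at ht
          have ht0 : 0 < t := lt_trans hz0 ht.1
          rw [(hasDerivAt_gfun hγpos ht0).deriv]
          apply div_nonpos_of_nonpos_of_nonneg
          · apply mul_nonpos_of_nonneg_of_nonpos (Real.exp_pos _).le
            by_contra hcon
            push_neg at hcon
            exact absurd (phi_prop (by positivity) (by positivity)
              (mul_le_mul_of_nonneg_right ht.1.le hγpos.le) hcon.le) (not_le.2 hsign)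
          · positivity
      have hle := hanti (Set.mem_Icc.2 ⟨le_refl z, hzy⟩) (Set.mem_Icc.2 ⟨hzy, le_refl y⟩) hzy
      linarith
end

section
/- Let Y be a real random variable with E[exp|Y|] < ∞, E[Y] = 0 and E[Y²] = σ² < ∞. For h ∈ ℝ fixed and n ∈ ℕ, define g_n(Y) = hY/√n − h²σ²/(2n). Then E[exp(g_n(Y))] = 1 + O(n^{−c}) for every c < 3/2; in particular, |E[exp(hY/√n − h²σ²/(2n))] − 1| ≤ L·n^{−c} for some constant L depending only on h, σ², and E[exp|Y|]. -/
open MeasureTheory ProbabilityTheory Finset Nat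

lemma my_exp_tsum (x : ℝ) : Real.exp x = ∑' n : ℕ, x ^ n / n ! := by
  rw [Real.exp_eq_exp_ℝ, NormedSpace.exp_eq_tsum_div]

lemma my_exp_tail (x : ℝ) (N : ℕ) :
    |Real.exp x - ∑ i ∈ Finset.range N, x ^ i / i !| ≤ |x| ^ N * Real.exp |x| := by
  have hs : Summable (fun n : ℕ => x ^ n / n !) := Real.summable_pow_div_factorial x
  have hs' : Summable (fun n : ℕ => |x| ^ n / n !) := Real.summable_pow_div_factorial |x|
  have hsN : Summable (fun i : ℕ => |x| ^ (i + N) / (i + N)!) :=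
    ((summable_nat_add_iff N).2 hs')
  have habs : (fun i : ℕ => |x ^ (i + N) / ((i + N)! : ℝ)|)
      = fun i : ℕ => |x| ^ (i + N) / ((i + N)! : ℝ) := by
    funext i; rw [abs_div, abs_pow, Nat.abs_cast]
  have hsN' : Summable (fun i : ℕ => |x ^ (i + N) / ((i + N)! : ℝ)|) := by
    rw [habs]; exact hsN
  have h1 : Real.exp x - ∑ i ∈ Finset.range N, x ^ i / i !
      = ∑' i : ℕ, x ^ (i + N) / (i + N)! := by
    rw [my_exp_tsum x, ← hs.sum_add_tsum_nat_add N]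
    ring
  rw [h1]
  have step1 : |∑' i : ℕ, x ^ (i + N) / ((i + N)! : ℝ)|
      ≤ ∑' i : ℕ, |x ^ (i + N) / ((i + N)! : ℝ)| := by
    have := norm_tsum_le_tsum_norm
      (f := fun i : ℕ => x ^ (i + N) / ((i + N)! : ℝ))
      (by simpa only [Real.norm_eq_abs] using hsN')
    simpa only [Real.norm_eq_abs] using this
  refine step1.trans ?_
  have step2 : ∑' i : ℕ, |x ^ (i + N) / ((i + N)! : ℝ)|
      ≤ ∑' i : ℕ, |x| ^ N * (|x| ^ i / i !) := by
    refine Summable.tsum_le_tsum (fun i => ?_) hsN' (hs'.mul_left _)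
    rw [abs_div, abs_pow, Nat.abs_cast]
    calc |x| ^ (i + N) / ((i + N)! : ℝ) ≤ |x| ^ (i + N) / (i ! : ℝ) := by
          apply div_le_div_of_nonneg_left (by positivity)
            (by exact_mod_cast i.factorial_pos)
          exact_mod_cast Nat.factorial_le (Nat.le_add_right i N)
      _ = |x| ^ N * (|x| ^ i / i !) := by rw [pow_add]; ring
  refine step2.trans ?_
  rw [tsum_mul_left, my_exp_tsum]

lemma my_exp_cubic (x : ℝ) :
    |Real.exp x - (1 + x + x ^ 2 / 2)| ≤ |x| ^ 3 * Real.exp |x| := by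
  have hh := my_exp_tail x 3
  have hsum : ∑ i ∈ Finset.range 3, x ^ i / (i ! : ℝ) = 1 + x + x ^ 2 / 2 := by
    rw [Finset.sum_range_succ, Finset.sum_range_succ, Finset.sum_range_succ,
      Finset.sum_range_zero]
    norm_num [Nat.factorial]
  rwa [hsum] at hh

lemma my_exp_quad {x : ℝ} (hx : 0 ≤ x) :
    Real.exp x - 1 - x ≤ x ^ 2 * Real.exp x := by
  have hh := my_exp_tail x 2
  have hsum : ∑ i ∈ Finset.range 2, x ^ i / (i ! : ℝ) = 1 + x := by
    rw [Finset.sum_range_succ, Finset.sum_range_succ, Finset.sum_range_zero]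
    norm_num [Nat.factorial]
  rw [hsum, abs_of_nonneg hx] at hh
  calc Real.exp x - 1 - x = Real.exp x - (1 + x) := by ring
    _ ≤ |Real.exp x - (1 + x)| := le_abs_self _
    _ ≤ x ^ 2 * Real.exp x := hh

set_option maxHeartbeats 1000000

/-- if `Y` has `E[exp|Y|] < ∞`, `E[Y] = 0` and `E[Y²] = σ²`, then for
every `c < 3/2` there is a constant `L` with
`|E[exp(hY/√n - h²σ²/(2n))] - 1| ≤ L n^{-c}` for all `n ≥ 1`. -/
theorem normalization_constant_bound
    {Ω : Type*} [MeasureSpace Ω] [IsProbabilityMeasure (ℙ : Measure Ω)]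
    (Y : Ω → ℝ) (hYmeas : Measurable Y)
    (hexp : Integrable (fun ω => Real.exp |Y ω|) ℙ)
    (σ2 : ℝ)
    (hmean : ∫ ω, Y ω ∂ℙ = 0)
    (hvar : ∫ ω, (Y ω) ^ 2 ∂ℙ = σ2)
    (h : ℝ) (c : ℝ) (hc : c < 3 / 2) :
    ∃ L : ℝ, ∀ n : ℕ, 1 ≤ n →
      |(∫ ω, Real.exp (h * Y ω / Real.sqrt n - h ^ 2 * σ2 / (2 * n)) ∂ℙ) - 1|
        ≤ L * (n : ℝ) ^ (-c) := by
  classical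
  have hAnn : 0 ≤ ∫ ω, Real.exp |Y ω| ∂ℙ := integral_nonneg fun ω => (Real.exp_pos _).le
  set A : ℝ := ∫ ω, Real.exp |Y ω| ∂ℙ with hA
  have hσ : 0 ≤ σ2 := hvar ▸ integral_nonneg fun ω => sq_nonneg _
  set C : ℝ := (h ^ 2 * σ2 / 2) ^ 2 + 48 * |h| ^ 3 * A with hC
  have hCnn : 0 ≤ C := by positivity
  -- integrability facts
  have hY_int : Integrable Y ℙ := by
    refine hexp.mono hYmeas.aestronglyMeasurable (ae_of_all _ fun ω => ?_)
    rw [Real.norm_eq_abs, Real.norm_eq_abs, abs_of_pos (Real.exp_pos _)]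
    calc |Y ω| ≤ |Y ω| + 1 := by linarith
      _ ≤ Real.exp |Y ω| := Real.add_one_le_exp _
  have hY2_int : Integrable (fun ω => Y ω ^ 2) ℙ := by
    have h2int : Integrable (fun ω => 2 * Real.exp |Y ω|) ℙ := hexp.const_mul 2
    refine h2int.mono ((hYmeas.pow_const 2).aestronglyMeasurable) (ae_of_all _ fun ω => ?_)
    rw [Real.norm_eq_abs, Real.norm_eq_abs, abs_of_nonneg (sq_nonneg _),
      abs_of_pos (by positivity)]
    have hf := Real.pow_div_factorial_le_exp (x := |Y ω|) (abs_nonneg _) 2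
    have h2f : ((2 : ℕ)! : ℝ) = 2 := by norm_num [Nat.factorial]
    rw [h2f] at hf
    calc Y ω ^ 2 = |Y ω| ^ 2 := (sq_abs _).symm
      _ ≤ 2 * Real.exp |Y ω| := by linarith
  -- the main estimate, valid when (2|h|)² ≤ n
  have main : ∀ n : ℕ, 1 ≤ n → (2 * |h|) ^ 2 ≤ (n : ℝ) →
      |(∫ ω, Real.exp (h * Y ω / Real.sqrt n - h ^ 2 * σ2 / (2 * n)) ∂ℙ) - 1|
        ≤ C * (n : ℝ) ^ (-(3 / 2 : ℝ)) := by
    intro n hn hn2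
    have hnpos : (0 : ℝ) < n := by exact_mod_cast hn
    have hn1' : (1 : ℝ) ≤ n := by exact_mod_cast hn
    set s : ℝ := Real.sqrt n with hsdef
    have hspos : 0 < s := Real.sqrt_pos.2 hnpos
    have hs2 : s ^ 2 = n := Real.sq_sqrt hnpos.le
    set a : ℝ := h / s with hadef
    have hha : 2 * |h| ≤ s := by
      have hmono := Real.sqrt_le_sqrt hn2
      rwa [Real.sqrt_sq (by positivity)] at hmono
    have haabs : |a| ≤ 1 / 2 := by
      rw [hadef, abs_div, abs_of_pos hspos, div_le_iff₀ hspos]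
      nlinarith
    have hbd : ∀ ω, |a * Y ω| ≤ |Y ω| / 2 := by
      intro ω
      rw [abs_mul]
      calc |a| * |Y ω| ≤ (1 / 2) * |Y ω| :=
            mul_le_mul_of_nonneg_right haabs (abs_nonneg _)
        _ = |Y ω| / 2 := by ring
    -- remainder function and pointwise bound
    set R : Ω → ℝ := fun ω => Real.exp (a * Y ω) - (1 + a * Y ω + (a * Y ω) ^ 2 / 2)
      with hRdef
    have hpt : ∀ ω, |R ω| ≤ 48 * |a| ^ 3 * Real.exp |Y ω| := by
      intro ω
      have h1 : |R ω| ≤ |a * Y ω| ^ 3 * Real.exp |a * Y ω| := my_exp_cubic (a * Y ω)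
      have h3 : Real.exp |a * Y ω| ≤ Real.exp (|Y ω| / 2) := Real.exp_le_exp.2 (hbd ω)
      have h4 : |Y ω| ^ 3 ≤ 48 * Real.exp (|Y ω| / 2) := by
        have hf := Real.pow_div_factorial_le_exp (x := |Y ω| / 2) (by positivity) 3
        have h6 : ((3 : ℕ)! : ℝ) = 6 := by norm_num [Nat.factorial]
        rw [h6] at hf
        nlinarith [abs_nonneg (Y ω)]
      calc |R ω| ≤ |a * Y ω| ^ 3 * Real.exp |a * Y ω| := h1
        _ = |a| ^ 3 * |Y ω| ^ 3 * Real.exp |a * Y ω| := by rw [abs_mul, mul_pow]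
        _ ≤ |a| ^ 3 * |Y ω| ^ 3 * Real.exp (|Y ω| / 2) := by
            apply mul_le_mul_of_nonneg_left h3 (by positivity)
        _ ≤ |a| ^ 3 * (48 * Real.exp (|Y ω| / 2)) * Real.exp (|Y ω| / 2) := by
            apply mul_le_mul_of_nonneg_right _ (Real.exp_pos _).le
            exact mul_le_mul_of_nonneg_left h4 (by positivity)
        _ = 48 * |a| ^ 3 * (Real.exp (|Y ω| / 2) * Real.exp (|Y ω| / 2)) := by ring
        _ = 48 * |a| ^ 3 * Real.exp |Y ω| := by rw [← Real.exp_add, add_halves]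
    -- integrability
    have hexp_int : Integrable (fun ω => Real.exp (a * Y ω)) ℙ := by
      refine hexp.mono ((Real.measurable_exp.comp (hYmeas.const_mul a)).aestronglyMeasurable)
        (ae_of_all _ fun ω => ?_)
      rw [Real.norm_eq_abs, Real.norm_eq_abs, abs_of_pos (Real.exp_pos _),
        abs_of_pos (Real.exp_pos _)]
      apply Real.exp_le_exp.2
      calc a * Y ω ≤ |a * Y ω| := le_abs_self _
        _ ≤ |Y ω| / 2 := hbd ω
        _ ≤ |Y ω| := by linarith [abs_nonneg (Y ω)]
    have hcY : Integrable (fun ω => a * Y ω) ℙ := hY_int.const_mul a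
    have hcY2 : Integrable (fun ω => (a ^ 2 / 2) * Y ω ^ 2) ℙ := hY2_int.const_mul (a ^ 2 / 2)
    have hc1 : Integrable (fun ω => (1 : ℝ) + a * Y ω) ℙ := (integrable_const 1).add hcY
    have hpoly_int : Integrable (fun ω => 1 + a * Y ω + (a ^ 2 / 2) * Y ω ^ 2) ℙ :=
      hc1.add hcY2
    have hR_int : Integrable R ℙ := by
      have hre : R = fun ω =>
          Real.exp (a * Y ω) - (1 + a * Y ω + (a ^ 2 / 2) * Y ω ^ 2) := by
        funext ω; rw [hRdef]; ring
      rw [hre]; exact hexp_int.sub hpoly_int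
    -- the expansion of the integral
    have i1 : ∫ ω, ((1 : ℝ) + a * Y ω + (a ^ 2 / 2) * Y ω ^ 2) ∂ℙ
        = 1 + a ^ 2 * σ2 / 2 := by
      rw [integral_add hc1 hcY2, integral_add (integrable_const 1) hcY,
        integral_const, integral_const_mul, integral_const_mul, hmean, hvar]
      simp only [measure_univ, probReal_univ, ENNReal.toReal_one, smul_eq_mul, mul_one, one_smul, mul_zero,
        add_zero]
      ring
    have hkey : ∫ ω, Real.exp (a * Y ω) ∂ℙ = 1 + a ^ 2 * σ2 / 2 + ∫ ω, R ω ∂ℙ := by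
      have hsplit : (fun ω => Real.exp (a * Y ω))
          = fun ω => (1 + a * Y ω + (a ^ 2 / 2) * Y ω ^ 2) + R ω := by
        funext ω; rw [hRdef]; ring
      rw [hsplit, integral_add hpoly_int hR_int, i1]
    -- bound on the remainder integral
    have hRbound : |∫ ω, R ω ∂ℙ| ≤ 48 * |a| ^ 3 * A := by
      calc |∫ ω, R ω ∂ℙ| ≤ ∫ ω, |R ω| ∂ℙ := by
            simpa only [Real.norm_eq_abs] using norm_integral_le_integral_norm R
        _ ≤ ∫ ω, 48 * |a| ^ 3 * Real.exp |Y ω| ∂ℙ :=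
            integral_mono hR_int.abs (hexp.const_mul _) hpt
        _ = 48 * |a| ^ 3 * A := by rw [integral_const_mul]
    -- rewrite the goal integral
    set b : ℝ := h ^ 2 * σ2 / (2 * n) with hb
    have hbnn : 0 ≤ b := by positivity
    have hab : a ^ 2 * σ2 / 2 = b := by
      rw [hadef, hb, div_pow, hs2]; ring
    have hIeq : (fun ω => Real.exp (h * Y ω / s - h ^ 2 * σ2 / (2 * n)))
        = fun ω => Real.exp (-b) * Real.exp (a * Y ω) := by
      funext ω
      rw [← Real.exp_add]
      congr 1
      rw [hadef, hb]
      ring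
    have hIint : ∫ ω, Real.exp (h * Y ω / s - h ^ 2 * σ2 / (2 * n)) ∂ℙ
        = Real.exp (-b) * (1 + b + ∫ ω, R ω ∂ℙ) := by
      calc ∫ ω, Real.exp (h * Y ω / s - h ^ 2 * σ2 / (2 * n)) ∂ℙ
          = ∫ ω, Real.exp (-b) * Real.exp (a * Y ω) ∂ℙ := by rw [hIeq]
        _ = Real.exp (-b) * ∫ ω, Real.exp (a * Y ω) ∂ℙ := by rw [integral_const_mul]
        _ = Real.exp (-b) * (1 + b + ∫ ω, R ω ∂ℙ) := by rw [hkey, hab]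
    set r : ℝ := ∫ ω, R ω ∂ℙ with hr
    -- elementary estimates
    have e2 : |Real.exp (-b) * (1 + b) - 1| ≤ b ^ 2 := by
      have hq : Real.exp b - 1 - b ≤ b ^ 2 * Real.exp b := my_exp_quad hbnn
      have hl : 0 ≤ Real.exp b - 1 - b := by nlinarith [Real.add_one_le_exp b]
      have hrw : Real.exp (-b) * (1 + b) - 1
          = -(Real.exp (-b) * (Real.exp b - 1 - b)) := by
        have : Real.exp (-b) * Real.exp b = 1 := by
          rw [← Real.exp_add]; simp
        nlinarith [this]
      rw [hrw, abs_neg, abs_of_nonneg (mul_nonneg (Real.exp_pos _).le hl)]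
      have hexp1 : Real.exp (-b) * Real.exp b = 1 := by rw [← Real.exp_add]; simp
      calc Real.exp (-b) * (Real.exp b - 1 - b)
          ≤ Real.exp (-b) * (b ^ 2 * Real.exp b) :=
            mul_le_mul_of_nonneg_left hq (Real.exp_pos _).le
        _ = b ^ 2 * (Real.exp (-b) * Real.exp b) := by ring
        _ = b ^ 2 := by rw [hexp1, mul_one]
    have e3 : Real.exp (-b) ≤ 1 := by
      rw [← Real.exp_zero]
      exact Real.exp_le_exp.2 (by linarith)
    have estep : |(∫ ω, Real.exp (h * Y ω / s - h ^ 2 * σ2 / (2 * n)) ∂ℙ) - 1|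
        ≤ b ^ 2 + |r| := by
      rw [hIint]
      have hsplit2 : Real.exp (-b) * (1 + b + r) - 1
          = (Real.exp (-b) * (1 + b) - 1) + Real.exp (-b) * r := by ring
      rw [hsplit2]
      calc |(Real.exp (-b) * (1 + b) - 1) + Real.exp (-b) * r|
          ≤ |Real.exp (-b) * (1 + b) - 1| + |Real.exp (-b) * r| := abs_add_le _ _
        _ ≤ b ^ 2 + |r| := by
            apply add_le_add e2
            rw [abs_mul, abs_of_pos (Real.exp_pos _)]
            calc Real.exp (-b) * |r| ≤ 1 * |r| :=
                  mul_le_mul_of_nonneg_right e3 (abs_nonneg _)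
              _ = |r| := one_mul _
    -- rpow computations
    have hs3 : s ^ 3 = (n : ℝ) ^ ((3 : ℝ) / 2) := by
      rw [hsdef, Real.sqrt_eq_rpow, ← Real.rpow_natCast ((n : ℝ) ^ ((1 : ℝ) / 2)) 3,
        ← Real.rpow_mul hnpos.le]
      norm_num
    have hppos : 0 < (n : ℝ) ^ ((3 : ℝ) / 2) := Real.rpow_pos_of_pos hnpos _
    have hpneg : (n : ℝ) ^ (-(3 / 2 : ℝ)) = 1 / (n : ℝ) ^ ((3 : ℝ) / 2) := by
      rw [Real.rpow_neg hnpos.le, one_div]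
    have hq32 : (n : ℝ) ^ ((3 : ℝ) / 2) ≤ (n : ℝ) ^ 2 := by
      have := Real.rpow_le_rpow_of_exponent_le hn1' (show (3 : ℝ) / 2 ≤ 2 by norm_num)
      rwa [Real.rpow_two] at this
    -- final bounds
    have hb2 : b ^ 2 ≤ (h ^ 2 * σ2 / 2) ^ 2 * (n : ℝ) ^ (-(3 / 2 : ℝ)) := by
      have hbeq : b ^ 2 = (h ^ 2 * σ2 / 2) ^ 2 / (n : ℝ) ^ 2 := by
        rw [hb, div_pow, div_pow, mul_pow, div_div]; rw [mul_pow]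
      rw [hbeq, hpneg, mul_one_div]
      exact div_le_div_of_nonneg_left (by positivity) hppos hq32
    have hrb : |r| ≤ 48 * |h| ^ 3 * A * (n : ℝ) ^ (-(3 / 2 : ℝ)) := by
      have haeq : |a| ^ 3 = |h| ^ 3 * (n : ℝ) ^ (-(3 / 2 : ℝ)) := by
        rw [hadef, abs_div, abs_of_pos hspos, div_pow, hs3, hpneg, mul_one_div]
      calc |r| ≤ 48 * |a| ^ 3 * A := hRbound
        _ = 48 * |h| ^ 3 * A * (n : ℝ) ^ (-(3 / 2 : ℝ)) := by rw [haeq]; ring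
    calc |(∫ ω, Real.exp (h * Y ω / s - h ^ 2 * σ2 / (2 * n)) ∂ℙ) - 1|
        ≤ b ^ 2 + |r| := estep
      _ ≤ (h ^ 2 * σ2 / 2) ^ 2 * (n : ℝ) ^ (-(3 / 2 : ℝ))
          + 48 * |h| ^ 3 * A * (n : ℝ) ^ (-(3 / 2 : ℝ)) := add_le_add hb2 hrb
      _ = C * (n : ℝ) ^ (-(3 / 2 : ℝ)) := by rw [hC]; ring
  -- assemble the constant
  set N : ℕ := ⌈(2 * |h|) ^ 2⌉₊ + 1 with hN
  set S : ℝ := ∑ m ∈ Finset.range N,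
    |(∫ ω, Real.exp (h * Y ω / Real.sqrt m - h ^ 2 * σ2 / (2 * m)) ∂ℙ) - 1| * (m : ℝ) ^ (c : ℝ)
    with hS
  have hSnn : 0 ≤ S :=
    Finset.sum_nonneg fun m _ =>
      mul_nonneg (abs_nonneg _) (Real.rpow_nonneg (Nat.cast_nonneg m) _)
  refine ⟨C + S, fun n hn => ?_⟩
  have hn1 : (1 : ℝ) ≤ n := by exact_mod_cast hn
  have hnpos : (0 : ℝ) < n := lt_of_lt_of_le zero_lt_one hn1
  have hrpnn : 0 ≤ (n : ℝ) ^ (-c) := Real.rpow_nonneg hnpos.le _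
  by_cases hcase : (2 * |h|) ^ 2 ≤ (n : ℝ)
  · refine (main n hn hcase).trans ?_
    have h32 : (n : ℝ) ^ (-(3 / 2 : ℝ)) ≤ (n : ℝ) ^ (-c) :=
      Real.rpow_le_rpow_of_exponent_le hn1 (by linarith)
    calc C * (n : ℝ) ^ (-(3 / 2 : ℝ)) ≤ C * (n : ℝ) ^ (-c) :=
          mul_le_mul_of_nonneg_left h32 hCnn
      _ ≤ (C + S) * (n : ℝ) ^ (-c) :=
          mul_le_mul_of_nonneg_right (by linarith) hrpnn
  · have hnN : n < N := by
      by_contra hcon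
      push_neg at hcon
      apply hcase
      calc (2 * |h|) ^ 2 ≤ (⌈(2 * |h|) ^ 2⌉₊ : ℝ) := Nat.le_ceil _
        _ ≤ (N : ℝ) := by rw [hN]; exact_mod_cast Nat.le_succ _
        _ ≤ (n : ℝ) := by exact_mod_cast hcon
    have hterm : |(∫ ω, Real.exp (h * Y ω / Real.sqrt n - h ^ 2 * σ2 / (2 * n)) ∂ℙ) - 1|
        * (n : ℝ) ^ (c : ℝ) ≤ S :=
      Finset.single_le_sum
        (f := fun m : ℕ =>
          |(∫ ω, Real.exp (h * Y ω / Real.sqrt m - h ^ 2 * σ2 / (2 * m)) ∂ℙ) - 1|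
            * (m : ℝ) ^ (c : ℝ))
        (fun m _ => mul_nonneg (abs_nonneg _) (Real.rpow_nonneg (Nat.cast_nonneg m) _))
        (Finset.mem_range.2 hnN)
    have hmul : (n : ℝ) ^ (c : ℝ) * (n : ℝ) ^ (-c) = 1 := by
      rw [← Real.rpow_add hnpos]
      simp
    calc |(∫ ω, Real.exp (h * Y ω / Real.sqrt n - h ^ 2 * σ2 / (2 * n)) ∂ℙ) - 1|
        = (|(∫ ω, Real.exp (h * Y ω / Real.sqrt n - h ^ 2 * σ2 / (2 * n)) ∂ℙ) - 1|
            * (n : ℝ) ^ (c : ℝ)) * (n : ℝ) ^ (-c) := by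
          rw [mul_assoc, hmul, mul_one]
      _ ≤ S * (n : ℝ) ^ (-c) := mul_le_mul_of_nonneg_right hterm hrpnn
      _ ≤ (C + S) * (n : ℝ) ^ (-c) :=
          mul_le_mul_of_nonneg_right (by linarith) hrpnn
end
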